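/- For N = 4, if m_1 + m_4 ≤ min(3m_2 - m_3, 3m_3 - m_2), then the ratios are monotone: σ_1 < σ_2 < σ_3 for all roots r_1 < r_2 < r_3 < r_4. -/

import Mathlib

set_option maxHeartbeats 2000000

/-- Core inequality: given the critical point equation in the first gap,
the logarithmic derivative is positive at the "transported" point of the second gap. -/
lemma main_ineq16 (m1 m2 m3 m4 a b v w : ℝ) (hm1 : 0 < m1) (hm2 : 0 < m2) (hm3 : 0 < m3)
    (hm4 : 0 < m4) (ha : 0 < a) (hb : 0 < b) (hv : 0 < v) (hw : 0 < w)
    (hcond : m1 + m3 + m4 ≤ 3 * m2)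
    (hC : m1 / a = m2 / b + m3 / (b + v) + m4 / (b + v + w)) :
    m3 / (v - a * v / (a + b)) + m4 / (v - a * v / (a + b) + w)
      < m1 / ((a + b) + a * v / (a + b)) + m2 / (a * v / (a + b)) := by
  have hu : 0 < a + b := by linarith
  have hA : 0 < b + v := by linarith
  have hB : 0 < b + v + w := by linarith
  have ha' : a ≠ 0 := ha.ne'
  have hb' : b ≠ 0 := hb.ne'
  have hv' : v ≠ 0 := hv.ne'
  have hu' : (a + b) ≠ 0 := hu.ne'
  have hA' : (b + v) ≠ 0 := hA.ne'
  have hB' : (b + v + w) ≠ 0 := hB.ne'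
  have hm1eq : m1 = (m2 / b + m3 / (b + v) + m4 / (b + v + w)) * a := (div_eq_iff ha').mp hC
  have hMvlt : m3 + m4 * ((b + v) / (b + v + w)) < 3 * m2 - m1 := by
    have h1 : (b + v) / (b + v + w) < 1 := (div_lt_one hB).mpr (by linarith)
    nlinarith
  have hMvpos : 0 < m3 + m4 * ((b + v) / (b + v + w)) := by positivity
  have hgpos : 0 < b / (b + v) := by positivity
  have hPalt : m1 * b / a = m2 + (b / (b + v)) * (m3 + m4 * ((b + v) / (b + v + w))) := by
    rw [hm1eq]; field_simp; ring
  have hQpos : 0 < m2 * (m1 * b / a) * ((m1 * b / a) + m1)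
      - m1 * (m3 + m4 * ((b + v) / (b + v + w))) * ((m1 * b / a) + (b / (b + v)) * m1) := by
    rw [hPalt]
    set G := b / (b + v) with hG
    set M := m3 + m4 * ((b + v) / (b + v + w)) with hM
    have hident : m2 * (m2 + G * M) * ((m2 + G * M) + m1) - m1 * M * ((m2 + G * M) + G * m1)
        = m2 * (G * M + m2 - m1) ^ 2 + m1 * ((3 * m2 - m1) - M) * (m2 + G * M) := by ring
    have h1 : 0 < (3 * m2 - m1) - M := by linarith [hMvlt]
    nlinarith [sq_nonneg (G * M + m2 - m1), mul_pos hgpos hMvpos,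
      mul_pos (mul_pos hm1 h1) (by positivity : (0:ℝ) < m2 + G * M)]
  have hT : a * (a + b + v) * (m3 * (b + v + w) + m4 * (b + v))
      < m2 * (a + b) * (b + v) * (b + v + w) := by
    have hident2 : (m2 * (a + b) * (b + v) * (b + v + w)
          - a * (a + b + v) * (m3 * (b + v + w) + m4 * (b + v))) * (m1 ^ 2 * b)
        = (m2 * (m1 * b / a) * ((m1 * b / a) + m1)
            - m1 * (m3 + m4 * ((b + v) / (b + v + w))) * ((m1 * b / a) + (b / (b + v)) * m1))
          * (a ^ 2 * (b + v) * (b + v + w)) := by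
      field_simp; ring
    nlinarith [mul_pos hQpos (by positivity : (0:ℝ) < a ^ 2 * (b + v) * (b + v + w)), hident2,
      mul_pos (mul_pos hm1 hm1) hb]
  have hbvwu : 0 < b * v + w * (a + b) := by positivity
  have h2 : m3 * ((a + b) + v) * a * (b + v + w) * (b * v + w * (a + b))
        + m4 * ((a + b) + v + w) * a * (b + v) * (b * v)
      < m2 * (a + b) * (b + v) * (b + v + w) * (b * v + w * (a + b)) := by
    nlinarith [mul_lt_mul_of_pos_right hT hbvwu,
      mul_pos (mul_pos (mul_pos hm4 ha) hA)
        (mul_pos hw (by positivity : (0:ℝ) < (a + b) ^ 2 + a * v))]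
  have e1 : (a + b) + a * v / (a + b) = ((a + b) ^ 2 + a * v) / (a + b) := by
    field_simp
  have e3 : v - a * v / (a + b) = b * v / (a + b) := by
    field_simp; ring
  have e4 : v - a * v / (a + b) + w = (b * v + w * (a + b)) / (a + b) := by
    field_simp; ring
  have hnum' : ((a + b) ^ 2 + a * v) ≠ 0 := by positivity
  have hbvwu' : (b * v + w * (a + b)) ≠ 0 := hbvwu.ne'
  have hS : m1 / ((a + b) + a * v / (a + b)) + m2 / (a * v / (a + b))
        - m3 / (v - a * v / (a + b)) - m4 / (v - a * v / (a + b) + w)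
      = ((b * (a + b) + a * v) * (a + b) *
          (m2 * (a + b) * (b + v) * (b + v + w) * (b * v + w * (a + b))
            - m3 * ((a + b) + v) * a * (b + v + w) * (b * v + w * (a + b))
            - m4 * ((a + b) + v + w) * a * (b + v) * (b * v)))
        / (((a + b) ^ 2 + a * v) * (a * b * v * (b + v) * (b + v + w) * (b * v + w * (a + b)))) := by
    rw [e4, e1, e3, hm1eq]
    rw [div_div_eq_mul_div, div_div_eq_mul_div, div_div_eq_mul_div, div_div_eq_mul_div]
    field_simp
    ring
  have hSpos : 0 < ((b * (a + b) + a * v) * (a + b) *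
          (m2 * (a + b) * (b + v) * (b + v + w) * (b * v + w * (a + b))
            - m3 * ((a + b) + v) * a * (b + v + w) * (b * v + w * (a + b))
            - m4 * ((a + b) + v + w) * a * (b + v) * (b * v)))
        / (((a + b) ^ 2 + a * v) * (a * b * v * (b + v) * (b + v + w) * (b * v + w * (a + b)))) := by
    apply div_pos
    · apply mul_pos
      · positivity
      · linarith [h2]
    · positivity
  linarith [hS, hSpos]

/-- One-step ratio monotonicity: σ (first gap) < τ (second gap). -/
lemma step16 (m1 m2 m3 m4 a b v w t : ℝ) (hm1 : 0 < m1) (hm2 : 0 < m2) (hm3 : 0 < m3)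
    (hm4 : 0 < m4) (ha : 0 < a) (hb : 0 < b) (hv : 0 < v) (hw : 0 < w)
    (hcond : m1 + m3 + m4 ≤ 3 * m2)
    (hC : m1 / a = m2 / b + m3 / (b + v) + m4 / (b + v + w))
    (ht0 : 0 < t) (htv : t < v)
    (hC2 : m1 / ((a + b) + t) + m2 / t = m3 / (v - t) + m4 / (v - t + w)) :
    a / (a + b) < t / v := by
  by_contra hcon
  push_neg at hcon
  have hu : 0 < a + b := by linarith
  have hyv : t ≤ a * v / (a + b) := by
    rw [le_div_iff₀ hu]
    rw [div_le_div_iff₀ hv hu] at hcon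
    linarith
  have hyv0 : 0 < a * v / (a + b) := by positivity
  have hyvv : a * v / (a + b) < v := by
    rw [div_lt_iff₀ hu]; nlinarith
  have main := main_ineq16 m1 m2 m3 m4 a b v w hm1 hm2 hm3 hm4 ha hb hv hw hcond hC
  have c1 : m1 / ((a + b) + a * v / (a + b)) ≤ m1 / ((a + b) + t) := by
    gcongr <;> linarith
  have c2 : m2 / (a * v / (a + b)) ≤ m2 / t := by
    gcongr
  have c3 : m3 / (v - t) ≤ m3 / (v - a * v / (a + b)) := by
    gcongr <;> linarith
  have c4 : m4 / (v - t + w) ≤ m4 / (v - a * v / (a + b) + w) := by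
    gcongr <;> linarith
  linarith [main, hC2, c1, c2, c3, c4]

theorem stmt_16 (m1 m2 m3 m4 : ℝ) (hm1 : 0 < m1) (hm2 : 0 < m2) (hm3 : 0 < m3)
    (hm4 : 0 < m4) (n : ℝ) (hn : n = m1 + m2 + m3 + m4) (hmm : m1 + m4 ≤ min (3 * m2 - m3) (3 * m3 - m2))
    (r1 r2 r3 r4 : ℝ) (h12 : r1 < r2) (h23 : r2 < r3) (h34 : r3 < r4)
    (x1 x2 x3 : ℝ) (hx1 : x1 ∈ Set.Ioo r1 r2) (hx2 : x2 ∈ Set.Ioo r2 r3)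
    (hx3 : x3 ∈ Set.Ioo r3 r4)
    (hc1 : m1 / (x1 - r1) + m2 / (x1 - r2) + m3 / (x1 - r3) + m4 / (x1 - r4) = 0)
    (hc2 : m1 / (x2 - r1) + m2 / (x2 - r2) + m3 / (x2 - r3) + m4 / (x2 - r4) = 0)
    (hc3 : m1 / (x3 - r1) + m2 / (x3 - r2) + m3 / (x3 - r3) + m4 / (x3 - r4) = 0)
    (σ1 σ2 σ3 : ℝ) (hσ1 : σ1 = (x1 - r1) / (r2 - r1))
    (hσ2 : σ2 = (x2 - r2) / (r3 - r2)) (hσ3 : σ3 = (x3 - r3) / (r4 - r3)) :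
    σ1 < σ2 ∧ σ2 < σ3 := by
  obtain ⟨hx1a, hx1b⟩ := hx1
  obtain ⟨hx2a, hx2b⟩ := hx2
  obtain ⟨hx3a, hx3b⟩ := hx3
  have hmmA : m1 + m4 ≤ 3 * m2 - m3 := le_trans hmm (min_le_left _ _)
  have hmmB : m1 + m4 ≤ 3 * m3 - m2 := le_trans hmm (min_le_right _ _)
  -- first pair : σ1 < σ2
  have hCa : m1 / (x1 - r1) = m2 / (r2 - x1) + m3 / ((r2 - x1) + (r3 - r2))
      + m4 / ((r2 - x1) + (r3 - r2) + (r4 - r3)) := by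
    rw [show (r2 - x1) + (r3 - r2) + (r4 - r3) = -(x1 - r4) by ring,
        show (r2 - x1) + (r3 - r2) = -(x1 - r3) by ring,
        show r2 - x1 = -(x1 - r2) by ring,
        div_neg, div_neg, div_neg]
    linarith [hc1]
  have hC2a : m1 / (((x1 - r1) + (r2 - x1)) + (x2 - r2)) + m2 / (x2 - r2)
      = m3 / ((r3 - r2) - (x2 - r2)) + m4 / ((r3 - r2) - (x2 - r2) + (r4 - r3)) := by
    rw [show ((x1 - r1) + (r2 - x1)) + (x2 - r2) = x2 - r1 by ring,
        show (r3 - r2) - (x2 - r2) + (r4 - r3) = -(x2 - r4) by ring,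
        show (r3 - r2) - (x2 - r2) = -(x2 - r3) by ring,
        div_neg, div_neg]
    linarith [hc2]
  have res1 := step16 m1 m2 m3 m4 (x1 - r1) (r2 - x1) (r3 - r2) (r4 - r3) (x2 - r2)
    hm1 hm2 hm3 hm4 (by linarith) (by linarith) (by linarith) (by linarith)
    (by linarith) hCa (by linarith) (by linarith) hC2a
  have hs12 : σ1 < σ2 := by
    rw [hσ1, hσ2, show r2 - r1 = (x1 - r1) + (r2 - x1) by ring]
    exact res1
  -- second pair : σ2 < σ3 (reflected configuration)
  have hCb : m4 / (r4 - x3) = m3 / (x3 - r3) + m2 / ((x3 - r3) + (r3 - r2))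
      + m1 / ((x3 - r3) + (r3 - r2) + (r2 - r1)) := by
    rw [show (x3 - r3) + (r3 - r2) + (r2 - r1) = x3 - r1 by ring,
        show (x3 - r3) + (r3 - r2) = x3 - r2 by ring,
        show r4 - x3 = -(x3 - r4) by ring, div_neg]
    linarith [hc3]
  have hC2b : m4 / (((r4 - x3) + (x3 - r3)) + (r3 - x2)) + m3 / (r3 - x2)
      = m2 / ((r3 - r2) - (r3 - x2)) + m1 / ((r3 - r2) - (r3 - x2) + (r2 - r1)) := by
    rw [show ((r4 - x3) + (x3 - r3)) + (r3 - x2) = -(x2 - r4) by ring,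
        show r3 - x2 = -(x2 - r3) by ring,
        show (r3 - r2) - (-(x2 - r3)) + (r2 - r1) = x2 - r1 by ring,
        show (r3 - r2) - (-(x2 - r3)) = x2 - r2 by ring,
        div_neg, div_neg]
    linarith [hc2]
  have res2 := step16 m4 m3 m2 m1 (r4 - x3) (x3 - r3) (r3 - r2) (r2 - r1) (r3 - x2)
    hm4 hm3 hm2 hm1 (by linarith) (by linarith) (by linarith) (by linarith)
    (by linarith) hCb (by linarith) (by linarith) hC2b
  have hs23 : σ2 < σ3 := by
    have hv3 : (0:ℝ) < r4 - r3 := by linarith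
    have hv2 : (0:ℝ) < r3 - r2 := by linarith
    have e5 : (r4 - x3) / ((r4 - x3) + (x3 - r3)) = 1 - σ3 := by
      rw [hσ3, show (r4 - x3) + (x3 - r3) = r4 - r3 by ring]
      field_simp
      ring
    have e6 : (r3 - x2) / (r3 - r2) = 1 - σ2 := by
      rw [hσ2]
      field_simp
      ring
    rw [e5, e6] at res2
    linarith
  exact ⟨hs12, hs23⟩
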